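/- Fix b ∈ ℝ, t ∈ ℝ, and ξ ∈ ℝ, and for real k write Λ_t^c(k,ξ) = (1 + k² + (ξ + k·t)²)^{c/2}. Then for every real k ≠ 0, the derivative in k satisfies ∂_k Λ_t^b(k,ξ) = b·(k + (ξ + kt)·t)·Λ_t^{b−2}(k,ξ), and |∂_k Λ_t^b(k,ξ)| ≤ |b| · ( 2/|k| + |ξ|/k² ) · Λ_t^b(k,ξ). -/

import Mathlib

/-- Derivative bounds in the (real) frequency variable `k` for the symbol
`Λ_t^b(k,ξ) = (1 + k² + (ξ + kt)²)^{b/2}`: for `k ≠ 0`,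
`∂_kΛ_t^b(k,ξ) = b(k + (ξ + kt)t)Λ_t^{b−2}(k,ξ)` and
`|∂_kΛ_t^b(k,ξ)| ≤ |b|(2/|k| + |ξ|/k²)Λ_t^b(k,ξ)`. -/
theorem stmt17 (b t ξ : ℝ) (k : ℝ) (hk : k ≠ 0) :
    HasDerivAt (fun k' : ℝ => (1 + k' ^ 2 + (ξ + k' * t) ^ 2) ^ (b / 2))
        (b * (k + (ξ + k * t) * t) * (1 + k ^ 2 + (ξ + k * t) ^ 2) ^ ((b - 2) / 2)) k ∧
      |b * (k + (ξ + k * t) * t) * (1 + k ^ 2 + (ξ + k * t) ^ 2) ^ ((b - 2) / 2)|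
        ≤ |b| * (2 / |k| + |ξ| / k ^ 2) * (1 + k ^ 2 + (ξ + k * t) ^ 2) ^ (b / 2) := by
  set x : ℝ := 1 + k ^ 2 + (ξ + k * t) ^ 2 with hxdef
  have hx : 0 < x := by positivity
  constructor
  · have hf : HasDerivAt (fun k' : ℝ => 1 + k' ^ 2 + (ξ + k' * t) ^ 2)
        (2 * k + 2 * (ξ + k * t) * t) k := by
      have h1 : HasDerivAt (fun k' : ℝ => k' ^ 2) (2 * k) k := by
        simpa using (hasDerivAt_pow 2 k)
      have h2 : HasDerivAt (fun k' : ℝ => (ξ + k' * t) ^ 2) (2 * (ξ + k * t) * t) k := by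
        have hi : HasDerivAt (fun k' : ℝ => ξ + k' * t) t k := by
          simpa using ((hasDerivAt_id k).mul_const t).const_add ξ
        have := hi.pow 2
        simpa [Pi.pow_def, mul_comm, mul_assoc, mul_left_comm] using this
      simpa [Pi.add_def] using ((h1.const_add 1).add h2)
    have := hf.rpow_const (p := b / 2) (Or.inl (ne_of_gt hx))
    convert this using 1
    have : b / 2 - 1 = (b - 2) / 2 := by ring
    rw [this]
    ring
  · have hk2 : (0:ℝ) < k ^ 2 := by positivity
    have hka : 0 < |k| := abs_pos.mpr hk
    -- key pointwise bound
    have hkt : |k * t| ≤ |ξ| + |ξ + k * t| := by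
      have h := abs_sub (ξ + k * t) ξ
      have he : ξ + k * t - ξ = k * t := by ring
      rw [he] at h
      linarith
    have key : |k + (ξ + k * t) * t| * k ^ 2 ≤ (2 * |k| + |ξ|) * x := by
      have h1 : |k + (ξ + k * t) * t| ≤ |k| + |ξ + k * t| * |t| := by
        calc |k + (ξ + k * t) * t| ≤ |k| + |(ξ + k * t) * t| := abs_add_le _ _
        _ = |k| + |ξ + k * t| * |t| := by rw [abs_mul]
      have h2 : |ξ + k * t| * |t| * |k| ≤ |ξ + k * t| * (|ξ| + |ξ + k * t|) := by
        have : |ξ + k * t| * |t| * |k| = |ξ + k * t| * |k * t| := by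
          rw [abs_mul]; ring
        rw [this]
        exact mul_le_mul_of_nonneg_left hkt (abs_nonneg _)
      have hk2abs : k ^ 2 = |k| ^ 2 := (sq_abs k).symm
      have hs2 : (ξ + k * t) ^ 2 = |ξ + k * t| ^ 2 := (sq_abs _).symm
      have hxge : x = 1 + |k| ^ 2 + |ξ + k * t| ^ 2 := by
        rw [hxdef, hk2abs, hs2]
      rw [hxge, hk2abs]
      nlinarith [abs_nonneg (ξ + k * t), abs_nonneg ξ, abs_nonneg k, hka, abs_nonneg t,
        mul_le_mul_of_nonneg_right h1 (sq_nonneg |k|),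
        mul_le_mul_of_nonneg_left h2 (abs_nonneg k),
        mul_nonneg (mul_nonneg (sq_nonneg (|k| - |ξ + k * t|)) (abs_nonneg ξ)) (abs_nonneg k),
        sq_nonneg (|k| - |ξ + k * t|), sq_nonneg (|k| * |ξ + k * t| - 1),
        mul_nonneg (sq_nonneg (|k| - |ξ + k * t|)) (abs_nonneg ξ),
        mul_nonneg (abs_nonneg k) (sq_nonneg (|ξ + k * t|))]
    have key' : |k + (ξ + k * t) * t| ≤ (2 / |k| + |ξ| / k ^ 2) * x := by
      have h : 2 / |k| + |ξ| / k ^ 2 = (2 * |k| + |ξ|) / k ^ 2 := by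
        rw [eq_div_iff (ne_of_gt hk2)]
        field_simp
        rw [← sq_abs k]
        ring
      rw [h, div_mul_eq_mul_div, le_div_iff₀ hk2]
      calc |k + (ξ + k * t) * t| * k ^ 2 ≤ (2 * |k| + |ξ|) * x := key
        _ = (2 * |k| + |ξ|) * x := rfl
    -- convert rpow exponent
    have hsplit : x ^ ((b - 2) / 2) = x ^ (b / 2) / x := by
      rw [show (b - 2)/2 = b/2 - 1 by ring, Real.rpow_sub hx, Real.rpow_one]
    rw [abs_mul, abs_mul, hsplit, abs_div, abs_of_pos hx,
      abs_of_pos (Real.rpow_pos_of_pos hx _)]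
    have h3 : |k + (ξ + k * t) * t| * (x ^ (b / 2) / x)
        ≤ (2 / |k| + |ξ| / k ^ 2) * x ^ (b / 2) := by
      rw [mul_div_assoc', div_le_iff₀ hx]
      calc |k + (ξ + k * t) * t| * x ^ (b / 2)
          ≤ ((2 / |k| + |ξ| / k ^ 2) * x) * x ^ (b / 2) := by
            exact mul_le_mul_of_nonneg_right key' (le_of_lt (Real.rpow_pos_of_pos hx _))
        _ = (2 / |k| + |ξ| / k ^ 2) * x ^ (b / 2) * x := by ring
    rw [mul_assoc, mul_assoc]
    exact mul_le_mul_of_nonneg_left h3 (abs_nonneg b)
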